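/- Let r ≥ 0 be a fixed natural number, 0 < α ≤ 1, and M > 0. There exists a constant D_r > 0 (depending only on r) such that for every natural number n ≥ 1, all reals p, q with 0 < q < p ≤ 1, and every r-times continuously differentiable f : [0,1] → ℝ whose r-th derivative satisfies |f^{(r)}(u) − f^{(r)}(v)| ≤ M|u − v|^α for all u, v ∈ [0,1] (i.e. f^{(r)} ∈ Lip_M(α)): sup_{x∈[0,1]} |B^{[r]}_{n,p,q}(f; x) − f(x)| ≤ D_r · M · [n]_{p,q}^{−(r+α)/2}. -/

import Mathlib

open Finset Set

/-- The `(p,q)`-integer `[k]_{p,q} = (p^k - q^k)/(p - q)` (so `[0]_{p,q} = 0`). -/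
noncomputable def pqInt (p q : ℝ) (k : ℕ) : ℝ := (p ^ k - q ^ k) / (p - q)

/-- The `(p,q)`-factorial `[k]_{p,q}! = ∏_{j=1}^k [j]_{p,q}` (`[0]_{p,q}! = 1`). -/
noncomputable def pqFact (p q : ℝ) (k : ℕ) : ℝ := ∏ j ∈ Finset.range k, pqInt p q (j + 1)

/-- The `(p,q)`-binomial coefficient. -/
noncomputable def pqBinom (p q : ℝ) (n k : ℕ) : ℝ :=
  pqFact p q n / (pqFact p q k * pqFact p q (n - k))

/-- The `(p,q)`-Bernstein basis function
`P_{n,k}(p,q;x) = p^{k(k-1)/2} [n choose k]_{p,q} x^k ∏_{s=0}^{n-k-1} (p^s - q^s x)`. -/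
noncomputable def pqBern (p q : ℝ) (n k : ℕ) (x : ℝ) : ℝ :=
  p ^ (k * (k - 1) / 2) * pqBinom p q n k * x ^ k *
    ∏ s ∈ Finset.range (n - k), (p ^ s - q ^ s * x)

/-- The node `x_{n,k} = p^{n-k} [k]_{p,q} / [n]_{p,q}`. -/
noncomputable def pqNode (p q : ℝ) (n k : ℕ) : ℝ := p ^ (n - k) * pqInt p q k / pqInt p q n

/-- The `(p,q)`-power central moment
`B_{n,p,q}((t-a)^m_{p,q}; y) = p^{-n(n-1)/2} ∑_{k=0}^n (∏_{s=0}^{m-1}(p^s x_{n,k} - q^s a)) P_{n,k}(p,q;y)`. -/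
noncomputable def pqPowMoment (p q : ℝ) (n m : ℕ) (a y : ℝ) : ℝ :=
  (p ^ (n * (n - 1) / 2))⁻¹ *
    ∑ k ∈ Finset.range (n + 1),
      (∏ s ∈ Finset.range m, (p ^ s * pqNode p q n k - q ^ s * a)) * pqBern p q n k y

/-- The `m`-th absolute central moment
`B_{n,p,q}(|t-x|^m; x) = p^{-n(n-1)/2} ∑_{k=0}^n |x_{n,k} - x|^m P_{n,k}(p,q;x)`. -/
noncomputable def pqAbsMoment (p q : ℝ) (n m : ℕ) (x : ℝ) : ℝ :=
  (p ^ (n * (n - 1) / 2))⁻¹ *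
    ∑ k ∈ Finset.range (n + 1), |pqNode p q n k - x| ^ m * pqBern p q n k x

/-- The ordinary `m`-th central moment
`B_{n,p,q}((t-x)^m; x) = p^{-n(n-1)/2} ∑_{k=0}^n (x_{n,k} - x)^m P_{n,k}(p,q;x)`. -/
noncomputable def pqMoment (p q : ℝ) (n m : ℕ) (x : ℝ) : ℝ :=
  (p ^ (n * (n - 1) / 2))⁻¹ *
    ∑ k ∈ Finset.range (n + 1), (pqNode p q n k - x) ^ m * pqBern p q n k x

/-- The `(p,q)`-Bernstein operator `B_{n,p,q}(f;x)`. -/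
noncomputable def pqBernstein (p q : ℝ) (n : ℕ) (f : ℝ → ℝ) (x : ℝ) : ℝ :=
  (p ^ (n * (n - 1) / 2))⁻¹ *
    ∑ k ∈ Finset.range (n + 1), f (pqNode p q n k) * pqBern p q n k x

/-- The `r`-th order generalization `B^{[r]}_{n,p,q}(f;x)` where `f^{(i)}` is interpreted as
`iteratedDerivWithin i f (Set.Icc 0 1)`. -/
noncomputable def pqBernsteinR (p q : ℝ) (n r : ℕ) (f : ℝ → ℝ) (x : ℝ) : ℝ :=
  (p ^ (n * (n - 1) / 2))⁻¹ *
    ∑ k ∈ Finset.range (n + 1), pqBern p q n k x *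
      ∑ i ∈ Finset.range (r + 1),
        iteratedDerivWithin i f (Set.Icc 0 1) (pqNode p q n k) / (i.factorial : ℝ) *
          (x - pqNode p q n k) ^ i

/-- The modulus of continuity on `[0,1]`:
`ω(g; δ) = sup { |g u - g v| : u, v ∈ [0,1], |u - v| ≤ δ }`. -/
noncomputable def modulusOfContinuity (g : ℝ → ℝ) (δ : ℝ) : ℝ :=
  sSup {d : ℝ | ∃ u ∈ Set.Icc (0 : ℝ) 1, ∃ v ∈ Set.Icc (0 : ℝ) 1, |u - v| ≤ δ ∧ d = |g u - g v|}

set_option maxHeartbeats 1000000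



noncomputable def tG (t : ℝ) (n : ℕ) : ℝ := ∑ s ∈ Finset.range n, t ^ s

noncomputable def tBinom (t : ℝ) : ℕ → ℕ → ℝ
  | 0, 0 => 1
  | 0, _ + 1 => 0
  | _ + 1, 0 => 1
  | n + 1, k + 1 => t ^ (n - k) * tBinom t n k + tBinom t n (k + 1)

noncomputable def tFact (t : ℝ) (n : ℕ) : ℝ := ∏ j ∈ Finset.range n, tG t (j + 1)

noncomputable def bq (t : ℝ) (n k : ℕ) (x : ℝ) : ℝ :=
  tBinom t n k * x ^ k * ∏ s ∈ Finset.range (n - k), (1 - t ^ s * x)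

lemma tG_nonneg {t : ℝ} (ht : 0 ≤ t) (n : ℕ) : 0 ≤ tG t n :=
  Finset.sum_nonneg fun _ _ => pow_nonneg ht _

lemma tG_succ (t : ℝ) (n : ℕ) : tG t (n + 1) = tG t n + t ^ n := Finset.sum_range_succ _ n

lemma tG_one (t : ℝ) : tG t 1 = 1 := by simp [tG]

lemma tG_one_le {t : ℝ} (ht : 0 ≤ t) {n : ℕ} (hn : 1 ≤ n) : 1 ≤ tG t n := by
  have h0 : (0:ℕ) ∈ Finset.range n := by simp; omega
  have := Finset.single_le_sum (f := fun s => t ^ s) (fun i _ => pow_nonneg ht i) h0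
  simpa [tG] using this

lemma tG_pos {t : ℝ} (ht : 0 ≤ t) {n : ℕ} (hn : 1 ≤ n) : 0 < tG t n :=
  lt_of_lt_of_le one_pos (tG_one_le ht hn)

lemma tG_mono {t : ℝ} (ht : 0 ≤ t) {k n : ℕ} (hkn : k ≤ n) : tG t k ≤ tG t n := by
  apply Finset.sum_le_sum_of_subset_of_nonneg (Finset.range_subset_range.2 hkn)
  exact fun i _ _ => pow_nonneg ht i

lemma tG_add (t : ℝ) (a b : ℕ) : tG t (a + b) = t ^ b * tG t a + tG t b := by
  induction a with
  | zero => simp [tG]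
  | succ a ih =>
    have : a + 1 + b = (a + b) + 1 := by omega
    rw [this, tG_succ, ih, tG_succ, pow_add]
    ring

@[simp] lemma tBinom_zero_right (t : ℝ) (n : ℕ) : tBinom t n 0 = 1 := by
  cases n <;> rfl

lemma tBinom_of_gt {t : ℝ} : ∀ {n k : ℕ}, n < k → tBinom t n k = 0 := by
  intro n
  induction n with
  | zero => intro k hk; match k, hk with | k + 1, _ => rfl
  | succ n ih =>
    intro k hk
    match k, hk with
    | k + 1, hk =>
      show t ^ (n - k) * tBinom t n k + tBinom t n (k + 1) = 0
      rw [ih (by omega), ih (by omega)]; ring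

lemma tBinom_self (t : ℝ) (n : ℕ) : tBinom t n n = 1 := by
  induction n with
  | zero => rfl
  | succ n ih =>
    show t ^ (n - n) * tBinom t n n + tBinom t n (n + 1) = 1
    rw [ih, tBinom_of_gt (by omega)]; simp

lemma tBinom_nonneg {t : ℝ} (ht : 0 ≤ t) : ∀ n k, 0 ≤ tBinom t n k := by
  intro n
  induction n with
  | zero =>
    intro k
    cases k with
    | zero => norm_num [tBinom]
    | succ k => rw [tBinom_of_gt (by omega)]
  | succ n ih =>
    intro k
    cases k with
    | zero => simp
    | succ k =>
      show 0 ≤ t ^ (n - k) * tBinom t n k + tBinom t n (k + 1)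
      have := ih k; have := ih (k + 1)
      positivity

lemma tFact_succ (t : ℝ) (n : ℕ) : tFact t (n + 1) = tFact t n * tG t (n + 1) :=
  Finset.prod_range_succ _ n

lemma tFact_pos {t : ℝ} (ht : 0 ≤ t) (n : ℕ) : 0 < tFact t n :=
  Finset.prod_pos fun i _ => tG_pos ht (by omega)

lemma tBinom_mul_tFact (t : ℝ) : ∀ n k, k ≤ n →
    tBinom t n k * (tFact t k * tFact t (n - k)) = tFact t n := by
  intro n
  induction n with
  | zero => intro k hk; interval_cases k; simp [tFact]
  | succ n ih =>
    intro k hk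
    cases k with
    | zero => simp [tFact]
    | succ j =>
      rcases eq_or_lt_of_le hk with h | h
      · have hj : j = n := by omega
        subst hj
        simp [tBinom_self, tFact]
      · have hjn : j + 1 ≤ n := by omega
        show (t ^ (n - j) * tBinom t n j + tBinom t n (j + 1)) *
          (tFact t (j+1) * tFact t (n + 1 - (j+1))) = tFact t (n+1)
        have h1 : n + 1 - (j + 1) = n - j := by omega
        have h2 : n - j = (n - (j+1)) + 1 := by omega
        rw [h1, tFact_succ t j, h2, tFact_succ t (n - (j+1))]
        have e1 : tBinom t n j * (tFact t j * tFact t (n - j)) = tFact t n := ih j (by omega)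
        have e2 : tBinom t n (j+1) * (tFact t (j+1) * tFact t (n - (j+1))) = tFact t n :=
          ih (j+1) hjn
        have e3 : tG t (n + 1) = t ^ (n - (j+1) + 1) * tG t (j + 1) + tG t (n - (j+1) + 1) := by
          have : n + 1 = (j + 1) + (n - (j+1) + 1) := by omega
          rw [this, tG_add]
        rw [tFact_succ, e3]
        rw [h2] at e1
        rw [tFact_succ t (n - (j+1))] at e1
        rw [tFact_succ t j] at e2
        linear_combination (t ^ (n - (j+1) + 1) * tG t (j + 1)) * e1 +
          tG t (n - (j+1) + 1) * e2

lemma bq_nonneg {t x : ℝ} (ht0 : 0 ≤ t) (ht1 : t ≤ 1) (hx0 : 0 ≤ x) (hx1 : x ≤ 1)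
    (n k : ℕ) : 0 ≤ bq t n k x := by
  apply mul_nonneg (mul_nonneg (tBinom_nonneg ht0 n k) (pow_nonneg hx0 k))
  apply Finset.prod_nonneg
  intro s _
  have h1 : t ^ s ≤ 1 := pow_le_one₀ ht0 ht1
  have h2 : t ^ s * x ≤ 1 := by
    calc t ^ s * x ≤ 1 * 1 := by
          apply mul_le_mul h1 hx1 hx0 zero_le_one
    _ = 1 := by ring
  linarith

lemma bq_of_gt {t x : ℝ} {n k : ℕ} (h : n < k) : bq t n k x = 0 := by
  simp [bq, tBinom_of_gt h]

lemma bq_zero (t x : ℝ) : bq t 0 0 x = 1 := by simp [bq]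

lemma bq_succ_zero (t x : ℝ) (n : ℕ) : bq t (n+1) 0 x = (1 - t ^ n * x) * bq t n 0 x := by
  simp only [bq, tBinom_zero_right, Nat.sub_zero, pow_zero]
  rw [Finset.prod_range_succ]
  ring

lemma bq_succ_succ (t x : ℝ) {n k : ℕ} (hk : k ≤ n) :
    bq t (n+1) (k+1) x
      = t ^ (n-k) * x * bq t n k x + (1 - t ^ (n-k-1) * x) * bq t n (k+1) x := by
  rcases eq_or_lt_of_le hk with h | h
  · subst h
    have h0 : bq t k (k+1) x = 0 := bq_of_gt (by omega)
    rw [h0]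
    unfold bq
    rw [tBinom_self, tBinom_self]
    simp [Nat.sub_self]
    ring
  · have h1 : n + 1 - (k + 1) = n - k := by omega
    have h2 : n - k = (n - k - 1) + 1 := by omega
    show (t ^ (n-k) * tBinom t n k + tBinom t n (k+1)) * x ^ (k+1) *
        ∏ s ∈ Finset.range (n+1-(k+1)), (1 - t ^ s * x) = _
    rw [h1]
    unfold bq
    rw [h2, Finset.prod_range_succ, ← h2]
    have h3 : n - (k+1) = n - k - 1 := by omega
    rw [h3]
    ring

lemma bq_step (t x : ℝ) (n : ℕ) (f : ℕ → ℝ) :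
    ∑ k ∈ Finset.range (n+2), bq t (n+1) k x * f k
      = ∑ k ∈ Finset.range (n+1), bq t n k x *
          (t ^ (n-k) * x * f (k+1) + (1 - t ^ (n-k) * x) * f k) := by
  rw [Finset.sum_range_succ' (fun k => bq t (n+1) k x * f k) (n+1)]
  have hrec : ∀ k ∈ Finset.range (n+1),
      bq t (n+1) (k+1) x * f (k+1)
        = t ^ (n-k) * x * bq t n k x * f (k+1)
          + (1 - t ^ (n-k-1) * x) * bq t n (k+1) x * f (k+1) := by
    intro k hk
    rw [Finset.mem_range] at hk
    rw [bq_succ_succ t x (by omega)]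
    ring
  rw [Finset.sum_congr rfl hrec, Finset.sum_add_distrib]
  -- second sum: reindex
  have hsec : ∑ k ∈ Finset.range (n+1), (1 - t ^ (n-k-1) * x) * bq t n (k+1) x * f (k+1)
      = ∑ k ∈ Finset.range (n+1), (1 - t ^ (n-k) * x) * bq t n k x * f k
        - (1 - t ^ n * x) * bq t n 0 x * f 0 := by
    have hcg : ∀ k ∈ Finset.range (n+1),
        (1 - t ^ (n-k-1) * x) * bq t n (k+1) x * f (k+1)
          = (1 - t ^ (n-(k+1)) * x) * bq t n (k+1) x * f (k+1) := by
      intro k _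
      have : n - k - 1 = n - (k+1) := by omega
      rw [this]
    rw [Finset.sum_congr rfl hcg]
    have hsplit := Finset.sum_range_succ'
      (fun k => (1 - t ^ (n-k) * x) * bq t n k x * f k) n
    have hpeel := Finset.sum_range_succ
      (fun k => (1 - t ^ (n-(k+1)) * x) * bq t n (k+1) x * f (k+1)) n
    have hzero : (1 - t ^ (n-(n+1)) * x) * bq t n (n+1) x * f (n+1) = 0 := by
      rw [bq_of_gt (by omega)]; ring
    rw [hpeel, hzero, hsplit]
    simp
  rw [hsec]
  have hlast : bq t (n+1) 0 x * f 0 = (1 - t ^ n * x) * bq t n 0 x * f 0 := by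
    rw [bq_succ_zero]
  rw [hlast]
  have hcomb : ∑ k ∈ Finset.range (n+1), t ^ (n-k) * x * bq t n k x * f (k+1)
      + ∑ k ∈ Finset.range (n+1), (1 - t ^ (n-k) * x) * bq t n k x * f k
      = ∑ k ∈ Finset.range (n+1), bq t n k x *
          (t ^ (n-k) * x * f (k+1) + (1 - t ^ (n-k) * x) * f k) := by
    rw [← Finset.sum_add_distrib]
    exact Finset.sum_congr rfl (fun k _ => by ring)
  linarith [hcomb]

lemma bq_sum_one (t x : ℝ) : ∀ n : ℕ, ∑ k ∈ Finset.range (n+1), bq t n k x = 1 := by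
  intro n
  induction n with
  | zero => simpa using bq_zero t x
  | succ n ih =>
    have := bq_step t x n (fun _ => 1)
    simp only [mul_one] at this
    calc ∑ k ∈ Finset.range (n+2), bq t (n+1) k x
        = ∑ k ∈ Finset.range (n+2), bq t (n+1) k x * 1 := by simp
      _ = ∑ k ∈ Finset.range (n+1), bq t n k x *
            (t ^ (n-k) * x * 1 + (1 - t ^ (n-k) * x) * 1) := bq_step t x n (fun _ => 1)
      _ = ∑ k ∈ Finset.range (n+1), bq t n k x := by
          apply Finset.sum_congr rfl; intro k _; ring
      _ = 1 := ih

noncomputable def tMom (t x : ℝ) (n m : ℕ) : ℝ :=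
  ∑ k ∈ Finset.range (n+1), bq t n k x * (tG t k - tG t n * x) ^ m

/-- the martingale one-step pointwise inequality -/
lemma key_pointwise (m : ℕ) (hm : 1 ≤ m) (z d₁ d₂ π v : ℝ) (hπ0 : 0 ≤ π) (hπ1 : π ≤ 1)
    (hd₁ : |d₁| ≤ 1) (hd₂ : |d₂| ≤ 1) (hmean : π * d₁ + (1 - π) * d₂ = 0)
    (hvar : π * d₁^2 + (1 - π) * d₂^2 ≤ v) :
    π * (z + d₁)^(2*m) + (1 - π) * (z + d₂)^(2*m) ≤
      z^(2*m) + v * ∑ i ∈ Finset.Icc 2 (2*m), ((2*m).choose i : ℝ) * |z|^(2*m - i) := by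
  have hv0 : 0 ≤ v := by
    have h1 := mul_nonneg hπ0 (sq_nonneg d₁)
    have h2 := mul_nonneg (by linarith : (0:ℝ) ≤ 1 - π) (sq_nonneg d₂)
    linarith
  set N := 2*m with hN
  have hN2 : 2 ≤ N := by omega
  have hexp : ∀ d : ℝ, (z + d)^N = ∑ i ∈ Finset.range (N+1),
      d ^ i * z ^ (N - i) * ((N.choose i : ℝ)) := by
    intro d
    rw [add_comm z d, add_pow]
  rw [hexp, hexp]
  rw [Finset.mul_sum, Finset.mul_sum, ← Finset.sum_add_distrib]
  have hsplit : Finset.range (N+1) = insert 0 (insert 1 (Finset.Icc 2 N)) := by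
    ext i
    simp [Finset.mem_range, Finset.mem_insert, Finset.mem_Icc]
    omega
  rw [hsplit]
  rw [Finset.sum_insert (by simp), Finset.sum_insert (by simp)]
  have h0 : π * (d₁ ^ 0 * z ^ (N - 0) * (N.choose 0 : ℝ))
      + (1 - π) * (d₂ ^ 0 * z ^ (N - 0) * (N.choose 0 : ℝ)) = z ^ N := by
    simp; ring
  have h1 : π * (d₁ ^ 1 * z ^ (N - 1) * (N.choose 1 : ℝ))
      + (1 - π) * (d₂ ^ 1 * z ^ (N - 1) * (N.choose 1 : ℝ)) = 0 := by
    have : π * (d₁ ^ 1 * z ^ (N - 1) * (N.choose 1 : ℝ))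
      + (1 - π) * (d₂ ^ 1 * z ^ (N - 1) * (N.choose 1 : ℝ))
      = (π * d₁ + (1 - π) * d₂) * (z ^ (N-1) * (N.choose 1 : ℝ)) := by ring
    rw [this, hmean, zero_mul]
  rw [h0, h1]
  rw [hsplit] at *
  have hbound : ∑ i ∈ Finset.Icc 2 N,
      (π * (d₁ ^ i * z ^ (N - i) * (N.choose i : ℝ))
        + (1 - π) * (d₂ ^ i * z ^ (N - i) * (N.choose i : ℝ)))
      ≤ v * ∑ i ∈ Finset.Icc 2 N, ((N.choose i : ℝ)) * |z| ^ (N - i) := by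
    rw [Finset.mul_sum]
    apply Finset.sum_le_sum
    intro i hi
    rw [Finset.mem_Icc] at hi
    have key : π * d₁ ^ i + (1 - π) * d₂ ^ i ≤ v := by
      have e₁ : π * d₁ ^ i ≤ π * d₁ ^ 2 := by
        have : d₁ ^ i ≤ |d₁| ^ i := le_abs_self _ |>.trans (by rw [← abs_pow])
        have h2 : |d₁| ^ i ≤ |d₁| ^ 2 := pow_le_pow_of_le_one (abs_nonneg _) hd₁ hi.1
        have h3 : |d₁| ^ 2 = d₁ ^ 2 := sq_abs d₁
        nlinarith [hπ0]
      have e₂ : (1 - π) * d₂ ^ i ≤ (1 - π) * d₂ ^ 2 := by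
        have : d₂ ^ i ≤ |d₂| ^ i := le_abs_self _ |>.trans (by rw [← abs_pow])
        have h2 : |d₂| ^ i ≤ |d₂| ^ 2 := pow_le_pow_of_le_one (abs_nonneg _) hd₂ hi.1
        have h3 : |d₂| ^ 2 = d₂ ^ 2 := sq_abs d₂
        nlinarith [sub_nonneg.2 hπ1]
      linarith
    have keyn : 0 ≤ π * d₁ ^ i + (1 - π) * d₂ ^ i ∨ True := Or.inr trivial
    calc π * (d₁ ^ i * z ^ (N - i) * (N.choose i : ℝ))
        + (1 - π) * (d₂ ^ i * z ^ (N - i) * (N.choose i : ℝ))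
        = (π * d₁ ^ i + (1 - π) * d₂ ^ i) * z ^ (N - i) * (N.choose i : ℝ) := by ring
      _ ≤ v * |z| ^ (N - i) * (N.choose i : ℝ) := by
          have hz : z ^ (N - i) ≤ |z| ^ (N - i) := by
            rw [← abs_pow]; exact le_abs_self _
          have habs : (π * d₁ ^ i + (1 - π) * d₂ ^ i) * z ^ (N - i)
              ≤ v * |z| ^ (N - i) := by
            have hlb : -v ≤ π * d₁ ^ i + (1 - π) * d₂ ^ i := by
              have e₁ : -(π * d₁ ^ 2) ≤ π * d₁ ^ i := by
                have : -(d₁ ^ 2) ≤ d₁ ^ i := by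
                  have h2 : |d₁ ^ i| ≤ |d₁| ^ 2 := by
                    rw [abs_pow]; exact pow_le_pow_of_le_one (abs_nonneg _) hd₁ hi.1
                  have := neg_abs_le (d₁ ^ i)
                  rw [sq_abs] at h2
                  linarith
                nlinarith [hπ0]
              have e₂ : -((1 - π) * d₂ ^ 2) ≤ (1 - π) * d₂ ^ i := by
                have : -(d₂ ^ 2) ≤ d₂ ^ i := by
                  have h2 : |d₂ ^ i| ≤ |d₂| ^ 2 := by
                    rw [abs_pow]; exact pow_le_pow_of_le_one (abs_nonneg _) hd₂ hi.1
                  have := neg_abs_le (d₂ ^ i)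
                  rw [sq_abs] at h2
                  linarith
                nlinarith [sub_nonneg.2 hπ1]
              have ha := mul_nonneg hπ0 (sq_nonneg d₁)
              have hb := mul_nonneg (by linarith : (0:ℝ) ≤ 1 - π) (sq_nonneg d₂)
              linarith
            have hzn : 0 ≤ |z| ^ (N-i) := by positivity
            rcases le_or_gt 0 (z ^ (N-i)) with hz0 | hz0
            · calc (π * d₁ ^ i + (1 - π) * d₂ ^ i) * z ^ (N - i)
                  ≤ v * z ^ (N-i) := mul_le_mul_of_nonneg_right key hz0
                _ ≤ v * |z| ^ (N-i) := mul_le_mul_of_nonneg_left hz hv0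
            · calc (π * d₁ ^ i + (1 - π) * d₂ ^ i) * z ^ (N - i)
                  ≤ (-v) * z ^ (N-i) := by nlinarith
                _ = v * (- (z ^ (N-i))) := by ring
                _ ≤ v * |z| ^ (N-i) := by
                    apply mul_le_mul_of_nonneg_left _ hv0
                    rw [← abs_pow]
                    exact neg_le_abs _
          have hc : (0:ℝ) ≤ (N.choose i : ℝ) := Nat.cast_nonneg _
          exact mul_le_mul_of_nonneg_right habs hc
      _ = v * ((N.choose i : ℝ) * |z| ^ (N - i)) := by ring
  linarith [hbound]

lemma pow_succ_ge (a b : ℝ) (ha : 0 ≤ a) (hb : 0 ≤ b) (m : ℕ) :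
    a ^ (m+1) + a ^ m * b ≤ (a + b) ^ (m+1) := by
  have h1 : a ^ m ≤ (a + b) ^ m := pow_le_pow_left₀ ha (by linarith) m
  calc a ^ (m+1) + a ^ m * b = a ^ m * (a + b) := by ring
    _ ≤ (a + b) ^ m * (a + b) := mul_le_mul_of_nonneg_right h1 (by linarith)
    _ = (a + b) ^ (m+1) := by ring

theorem tMom_le (m : ℕ) : ∃ C : ℝ, 1 ≤ C ∧ ∀ m' ≤ m, ∀ t x : ℝ,
    0 ≤ t → t ≤ 1 → 0 ≤ x → x ≤ 1 → ∀ n : ℕ, 1 ≤ n →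
      tMom t x n (2*m') ≤ C * tG t n ^ m' := by
  induction m with
  | zero =>
    refine ⟨1, le_refl 1, ?_⟩
    intro m' hm' t x ht0 ht1 hx0 hx1 n hn
    interval_cases m'
    simp only [tMom, Nat.mul_zero, pow_zero, mul_one, one_mul]
    rw [bq_sum_one]
  | succ m IH =>
    obtain ⟨C, hC1, hC⟩ := IH
    set N := 2*(m+1) with hNdef
    refine ⟨2 * 2^N * C + C, by nlinarith [pow_pos (by norm_num : (0:ℝ) < 2) N], ?_⟩
    intro m' hm' t x ht0 ht1 hx0 hx1 n hn
    rcases Nat.lt_or_ge m' (m+1) with h | h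
    · -- lower moments: use C
      have := hC m' (by omega) t x ht0 ht1 hx0 hx1 n hn
      have hGn : 0 ≤ tG t n ^ m' := pow_nonneg (tG_nonneg ht0 n) m'
      have h2 : C * tG t n ^ m' ≤ (2 * 2^N * C + C) * tG t n ^ m' := by
        apply mul_le_mul_of_nonneg_right _ hGn
        nlinarith [pow_pos (by norm_num : (0:ℝ) < 2) N]
      linarith
    · have hm'' : m' = m + 1 := by omega
      subst hm''
      -- abs moment sublemma
      have habs : ∀ n : ℕ, 1 ≤ n → ∀ j : ℕ, j ≤ 2*m →
          ∑ k ∈ Finset.range (n+1), bq t n k x * |tG t k - tG t n * x| ^ j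
            ≤ C * tG t n ^ m := by
        intro n hn j hj
        have hG1 : 1 ≤ tG t n := tG_one_le ht0 hn
        rcases Nat.even_or_odd j with ⟨u, hu⟩ | ⟨u, hu⟩
        · -- even moment
          have hju : j = 2*u := by omega
          subst hju
          have heq : ∀ k, bq t n k x * |tG t k - tG t n * x| ^ (2*u)
              = bq t n k x * (tG t k - tG t n * x) ^ (2*u) := by
            intro k
            congr 1
            rw [pow_mul, pow_mul, sq_abs]
          rw [Finset.sum_congr rfl (fun k _ => heq k)]
          have h1 : tMom t x n (2*u) ≤ C * tG t n ^ u := hC u (by omega) t x ht0 ht1 hx0 hx1 n hn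
          have h2 : tG t n ^ u ≤ tG t n ^ m := pow_le_pow_right₀ hG1 (by omega)
          calc ∑ k ∈ Finset.range (n+1), bq t n k x * (tG t k - tG t n * x) ^ (2*u)
              = tMom t x n (2*u) := rfl
            _ ≤ C * tG t n ^ u := h1
            _ ≤ C * tG t n ^ m := by nlinarith
        · -- odd moment
          have hum : u + 1 ≤ m := by omega
          have hptw : ∀ k, bq t n k x * |tG t k - tG t n * x| ^ j
              ≤ (bq t n k x * (tG t k - tG t n * x) ^ (2*u)
                + bq t n k x * (tG t k - tG t n * x) ^ (2*(u+1))) / 2 := by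
            intro k
            set z := tG t k - tG t n * x
            have hb := bq_nonneg ht0 ht1 hx0 hx1 n k
            have hz1 : z ^ (2*u) = (|z| ^ u) ^ 2 := by
              rw [← abs_pow, sq_abs, ← pow_mul, Nat.mul_comm u 2]
            have hz2 : z ^ (2*(u+1)) = (|z| ^ (u+1)) ^ 2 := by
              rw [← abs_pow, sq_abs, ← pow_mul, Nat.mul_comm (u+1) 2]
            have hz3 : |z| ^ j = |z| ^ u * |z| ^ (u+1) := by
              rw [← pow_add]
              congr 1
              omega
            have hsq := sq_nonneg (|z| ^ u - |z| ^ (u+1))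
            have key : |z| ^ j ≤ (z ^ (2*u) + z ^ (2*(u+1))) / 2 := by
              rw [hz1, hz2, hz3]; nlinarith
            nlinarith
          calc ∑ k ∈ Finset.range (n+1), bq t n k x * |tG t k - tG t n * x| ^ j
              ≤ ∑ k ∈ Finset.range (n+1), (bq t n k x * (tG t k - tG t n * x) ^ (2*u)
                  + bq t n k x * (tG t k - tG t n * x) ^ (2*(u+1))) / 2 :=
                Finset.sum_le_sum (fun k _ => hptw k)
            _ = (tMom t x n (2*u) + tMom t x n (2*(u+1))) / 2 := by
                rw [← Finset.sum_div, Finset.sum_add_distrib]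
                rfl
            _ ≤ (C * tG t n ^ u + C * tG t n ^ (u+1)) / 2 := by
                have h1 := hC u (by omega) t x ht0 ht1 hx0 hx1 n hn
                have h2 := hC (u+1) hum t x ht0 ht1 hx0 hx1 n hn
                linarith
            _ ≤ C * tG t n ^ m := by
                have h2 : tG t n ^ u ≤ tG t n ^ m := pow_le_pow_right₀ hG1 (by omega)
                have h3 : tG t n ^ (u+1) ≤ tG t n ^ m := pow_le_pow_right₀ hG1 (by omega)
                nlinarith
      -- main induction on n
      induction n, hn using Nat.le_induction with
      | base =>
        have hb0 : bq t 1 0 x = 1 - x := by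
          show tBinom t 1 0 * x ^ 0 * ∏ s ∈ Finset.range (1-0), (1 - t^s * x) = 1 - x
          norm_num [tBinom]
        have hb1 : bq t 1 1 x = x := by
          show tBinom t 1 1 * x ^ 1 * ∏ s ∈ Finset.range (1-1), (1 - t^s * x) = x
          rw [tBinom_self]; norm_num
        have hG0 : tG t 0 = 0 := by simp [tG]
        show tMom t x 1 (2*(m+1)) ≤ (2 * 2^N * C + C) * tG t 1 ^ (m+1)
        unfold tMom
        rw [show (1:ℕ)+1 = 2 from rfl, Finset.sum_range_succ, Finset.sum_range_succ,
          Finset.sum_range_zero, hb0, hb1, hG0, tG_one]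
        have e1 : (0 - (1:ℝ) * x) ^ (2*(m+1)) = x ^ (2*(m+1)) := by
          rw [show (0 - (1:ℝ)*x) = -x by ring]
          exact Even.neg_pow ⟨m+1, by omega⟩ x
        have e2 : x ^ (2*(m+1)) ≤ 1 := pow_le_one₀ hx0 hx1
        have e3 : (1 - (1:ℝ)*x) ^ (2*(m+1)) ≤ 1 := by
          rw [one_mul]
          exact pow_le_one₀ (by linarith) (by linarith)
        have e4 : (0:ℝ) ≤ (1 - (1:ℝ)*x) ^ (2*(m+1)) := by
          rw [mul_comm 2 (m+1), pow_mul]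
          positivity
        have e5 : (0:ℝ) ≤ x ^ (2*(m+1)) := by positivity
        have hK : (1:ℝ) ≤ 2 * 2^N * C + C := by
          nlinarith [pow_pos (by norm_num : (0:ℝ) < 2) N]
        rw [one_pow]
        rw [zero_add, e1]
        nlinarith
      | succ n hn1 ihn =>
        have hG1 : 1 ≤ tG t n := tG_one_le ht0 hn1
        have hGn0 : 0 ≤ tG t n := by linarith
        have htn0 : 0 ≤ t ^ n := pow_nonneg ht0 n
        have htn1 : t ^ n ≤ 1 := pow_le_one₀ ht0 ht1
        -- pointwise step bound for each k ≤ n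
        have hpoint : ∀ k, k ≤ n →
            t ^ (n-k) * x * (tG t (k+1) - tG t (n+1) * x) ^ (2*(m+1))
              + (1 - t ^ (n-k) * x) * (tG t k - tG t (n+1) * x) ^ (2*(m+1))
            ≤ (tG t k - tG t n * x) ^ (2*(m+1))
              + (2 * t^n) * ∑ i ∈ Finset.Icc 2 (2*(m+1)),
                  (((2*(m+1)).choose i : ℝ)) * |tG t k - tG t n * x| ^ (2*(m+1) - i) := by
          intro k hk
          set z := tG t k - tG t n * x with hz
          have htk0 : 0 ≤ t ^ k := pow_nonneg ht0 k
          have htk1 : t ^ k ≤ 1 := pow_le_one₀ ht0 ht1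
          have htnk0 : 0 ≤ t ^ (n-k) := pow_nonneg ht0 _
          have htnk1 : t ^ (n-k) ≤ 1 := pow_le_one₀ ht0 ht1
          have hpow : t ^ (n-k) * t ^ k = t ^ n := by
            rw [← pow_add]; congr 1; omega
          have hnk : t ^ n ≤ t ^ k := pow_le_pow_of_le_one ht0 ht1 (by omega)
          have h1 : tG t (k+1) - tG t (n+1) * x = z + (t^k - t^n * x) := by
            rw [tG_succ, tG_succ]; ring
          have h2 : tG t k - tG t (n+1) * x = z + (-(t^n * x)) := by
            rw [tG_succ]; ring
          rw [h1, h2]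
          apply key_pointwise (m+1) (by omega) z (t^k - t^n*x) (-(t^n*x)) (t^(n-k)*x) (2*t^n)
          · positivity
          · nlinarith
          · rw [abs_le]; constructor <;> nlinarith
          · rw [abs_le]; constructor <;> nlinarith
          · linear_combination x * hpow
          · have hd1a : 0 ≤ t^k - t^n*x := by nlinarith
            have hd1b : t^k - t^n*x ≤ t^k := by nlinarith
            have hs1 : (t^k - t^n*x)^2 ≤ t^k * t^k := by nlinarith
            have hπx : 0 ≤ t^(n-k)*x := mul_nonneg htnk0 hx0
            have hv1 : t^(n-k)*x * (t^k - t^n*x)^2 ≤ t^n := by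
              calc t^(n-k)*x * (t^k - t^n*x)^2 ≤ t^(n-k) * (t^k * t^k) := by
                    have hxd : x * (t^k - t^n*x)^2 ≤ t^k * t^k := by
                      nlinarith [sq_nonneg (t^k - t^n*x)]
                    nlinarith [mul_le_mul_of_nonneg_left hxd htnk0]
                _ = (t^(n-k) * t^k) * t^k := by ring
                _ = t^n * t^k := by rw [hpow]
                _ ≤ t^n * 1 := by nlinarith
                _ = t^n := by ring
            have hv2 : (1 - t^(n-k)*x) * (-(t^n*x))^2 ≤ t^n := by
              have h1 : (-(t^n*x))^2 = (t^n*x)^2 := by ring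
              have h2 : (t^n*x)^2 ≤ t^n := by nlinarith
              have h3 : 1 - t^(n-k)*x ≤ 1 := by linarith
              have h4 : (0:ℝ) ≤ (t^n*x)^2 := sq_nonneg _
              nlinarith
            linarith
        -- assemble
        have hstep := bq_step t x n (fun k => (tG t k - tG t (n+1) * x) ^ (2*(m+1)))
        have hAbound : ∀ i ∈ Finset.Icc 2 (2*(m+1)),
            (((2*(m+1)).choose i : ℝ)) *
              (∑ k ∈ Finset.range (n+1), bq t n k x * |tG t k - tG t n * x| ^ (2*(m+1) - i))
            ≤ (((2*(m+1)).choose i : ℝ)) * (C * tG t n ^ m) := by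
          intro i hi
          rw [Finset.mem_Icc] at hi
          exact mul_le_mul_of_nonneg_left
            (habs n hn1 (2*(m+1) - i) (by omega)) (Nat.cast_nonneg _)
        have hchoose : ∑ i ∈ Finset.Icc 2 (2*(m+1)), (((2*(m+1)).choose i : ℝ)) ≤ 2^N := by
          have hsub : Finset.Icc 2 (2*(m+1)) ⊆ Finset.range (2*(m+1)+1) := by
            intro i hi
            rw [Finset.mem_Icc] at hi
            rw [Finset.mem_range]
            omega
          have hle := Finset.sum_le_sum_of_subset_of_nonneg hsub
            (fun i _ _ => (Nat.cast_nonneg ((2*(m+1)).choose i) : (0:ℝ) ≤ _))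
          have heq2 : ∑ i ∈ Finset.range (2*(m+1)+1), (((2*(m+1)).choose i : ℝ)) = 2^N := by
            rw [← Nat.cast_sum]
            rw [Nat.sum_range_choose]
            push_cast
            norm_num
            exact hNdef.symm
          linarith
        have hmom : tMom t x (n+1) (2*(m+1))
            ≤ tMom t x n (2*(m+1)) + (2 * t^n) * (2^N * (C * tG t n ^ m)) := by
          have e0 : tMom t x (n+1) (2*(m+1)) = ∑ k ∈ Finset.range (n+2),
              bq t (n+1) k x * (tG t k - tG t (n+1) * x) ^ (2*(m+1)) := rfl
          rw [e0, hstep]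
          have hterm : ∀ k ∈ Finset.range (n+1),
              bq t n k x * (t ^ (n-k) * x * (tG t (k+1) - tG t (n+1) * x) ^ (2*(m+1))
                + (1 - t ^ (n-k) * x) * (tG t k - tG t (n+1) * x) ^ (2*(m+1)))
              ≤ bq t n k x * ((tG t k - tG t n * x) ^ (2*(m+1))
                + (2 * t^n) * ∑ i ∈ Finset.Icc 2 (2*(m+1)),
                    (((2*(m+1)).choose i : ℝ)) * |tG t k - tG t n * x| ^ (2*(m+1) - i)) := by
            intro k hk
            rw [Finset.mem_range] at hk
            exact mul_le_mul_of_nonneg_left (hpoint k (by omega))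
              (bq_nonneg ht0 ht1 hx0 hx1 n k)
          have hsum1 := Finset.sum_le_sum hterm
          have hswap : ∑ k ∈ Finset.range (n+1), bq t n k x *
                ((tG t k - tG t n * x) ^ (2*(m+1))
                  + (2 * t^n) * ∑ i ∈ Finset.Icc 2 (2*(m+1)),
                      (((2*(m+1)).choose i : ℝ)) * |tG t k - tG t n * x| ^ (2*(m+1) - i))
              = tMom t x n (2*(m+1)) + (2*t^n) * ∑ i ∈ Finset.Icc 2 (2*(m+1)),
                  (((2*(m+1)).choose i : ℝ)) *
                    (∑ k ∈ Finset.range (n+1), bq t n k x * |tG t k - tG t n * x| ^ (2*(m+1) - i)) := by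
            have expand : ∀ k ∈ Finset.range (n+1), bq t n k x *
                ((tG t k - tG t n * x) ^ (2*(m+1))
                  + (2 * t^n) * ∑ i ∈ Finset.Icc 2 (2*(m+1)),
                      (((2*(m+1)).choose i : ℝ)) * |tG t k - tG t n * x| ^ (2*(m+1) - i))
                = bq t n k x * (tG t k - tG t n * x) ^ (2*(m+1))
                  + (2 * t^n) * ∑ i ∈ Finset.Icc 2 (2*(m+1)),
                      (((2*(m+1)).choose i : ℝ)) *
                        (bq t n k x * |tG t k - tG t n * x| ^ (2*(m+1) - i)) := by
              intro k _
              rw [mul_add]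
              congr 1
              rw [Finset.mul_sum, Finset.mul_sum, Finset.mul_sum]
              apply Finset.sum_congr rfl
              intro i _
              ring
            rw [Finset.sum_congr rfl expand, Finset.sum_add_distrib]
            congr 1
            rw [← Finset.mul_sum]
            congr 1
            rw [Finset.sum_comm]
            apply Finset.sum_congr rfl
            intro i _
            rw [Finset.mul_sum]
          rw [hswap] at hsum1
          have hA2 : ∑ i ∈ Finset.Icc 2 (2*(m+1)),
              (((2*(m+1)).choose i : ℝ)) *
                (∑ k ∈ Finset.range (n+1), bq t n k x * |tG t k - tG t n * x| ^ (2*(m+1) - i))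
              ≤ 2^N * (C * tG t n ^ m) := by
            calc ∑ i ∈ Finset.Icc 2 (2*(m+1)),
                (((2*(m+1)).choose i : ℝ)) *
                  (∑ k ∈ Finset.range (n+1), bq t n k x * |tG t k - tG t n * x| ^ (2*(m+1) - i))
                ≤ ∑ i ∈ Finset.Icc 2 (2*(m+1)), (((2*(m+1)).choose i : ℝ)) * (C * tG t n ^ m) :=
                  Finset.sum_le_sum hAbound
              _ = (∑ i ∈ Finset.Icc 2 (2*(m+1)), (((2*(m+1)).choose i : ℝ))) * (C * tG t n ^ m) := by
                  rw [Finset.sum_mul]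
              _ ≤ 2^N * (C * tG t n ^ m) := by
                  apply mul_le_mul_of_nonneg_right hchoose
                  have : (0:ℝ) ≤ tG t n ^ m := pow_nonneg hGn0 m
                  nlinarith
          nlinarith [hsum1, hA2, htn0]
        -- close the induction
        have hgrow : tG t n ^ (m+1) + tG t n ^ m * t ^ n ≤ tG t (n+1) ^ (m+1) := by
          rw [tG_succ]
          exact pow_succ_ge (tG t n) (t^n) hGn0 htn0 m
        have hCpos : (0:ℝ) < C := by linarith
        have h2N : (0:ℝ) < 2^N := pow_pos (by norm_num) N
        have hGm : (0:ℝ) ≤ tG t n ^ m := pow_nonneg hGn0 m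
        calc tMom t x (n+1) (2*(m+1))
            ≤ tMom t x n (2*(m+1)) + (2 * t^n) * (2^N * (C * tG t n ^ m)) := hmom
          _ ≤ (2 * 2^N * C + C) * tG t n ^ (m+1) + (2 * 2^N * C) * (tG t n ^ m * t^n) := by
              have := ihn
              nlinarith [ihn]
          _ ≤ (2 * 2^N * C + C) * (tG t n ^ (m+1) + tG t n ^ m * t^n) := by
              nlinarith [mul_nonneg hGm htn0]
          _ ≤ (2 * 2^N * C + C) * tG t (n+1) ^ (m+1) := by
              apply mul_le_mul_of_nonneg_left hgrow
              nlinarith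


section PQ
variable {p q : ℝ} (hq : 0 < q) (hqp : q < p)
include hq hqp

lemma hp0 : 0 < p := hq.trans hqp

lemma ht0' : 0 ≤ q / p := le_of_lt (div_pos hq (hp0 hq hqp))

lemma ht1' : q / p ≤ 1 := le_of_lt ((div_lt_one (hp0 hq hqp)).2 hqp)

lemma pqInt_eq (n : ℕ) : pqInt p q n = p ^ (n-1) * tG (q/p) n := by
  have hp : (0:ℝ) < p := hp0 hq hqp
  have hpq : p - q ≠ 0 := by linarith
  cases n with
  | zero => simp [pqInt, tG]
  | succ n =>
    have hgeom := geom_sum₂_mul p q (n+1)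
    -- (∑ i ∈ range (n+1), p ^ i * q ^ (n - i)) * (p - q) = p ^ (n+1) - q ^ (n+1)
    simp only [Nat.add_sub_cancel] at hgeom
    rw [pqInt, ← hgeom, mul_div_assoc, div_self hpq, mul_one]
    have : ∀ i ∈ Finset.range (n+1), p ^ i * q ^ (n - i)
        = p ^ n * (q/p) ^ (n - i) := by
      intro i hi
      rw [Finset.mem_range] at hi
      rw [div_pow, ← mul_div_assoc, eq_div_iff (by positivity : p ^ (n-i) ≠ 0)]
      have hpp : p ^ i * p ^ (n-i) = p ^ n := by
        rw [← pow_add]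
        congr 1
        omega
      linear_combination q ^ (n-i) * hpp
    rw [Finset.sum_congr rfl this, ← Finset.mul_sum]
    simp only [Nat.add_sub_cancel]
    congr 1
    rw [tG]
    have := Finset.sum_range_reflect (fun i => (q/p) ^ i) (n+1)
    simp only [Nat.add_sub_cancel] at this
    exact this

lemma pqInt_pos {n : ℕ} (hn : 1 ≤ n) : 0 < pqInt p q n := by
  rw [pqInt_eq hq hqp]
  have hp : (0:ℝ) < p := hp0 hq hqp
  exact mul_pos (pow_pos hp _) (tG_pos (ht0' hq hqp) hn)

lemma pqInt_le_tG (hp1 : p ≤ 1) {n : ℕ} : pqInt p q n ≤ tG (q/p) n := by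
  rw [pqInt_eq hq hqp]
  have hp : (0:ℝ) < p := hp0 hq hqp
  have h1 : p ^ (n-1) ≤ 1 := pow_le_one₀ (le_of_lt hp) hp1
  have h2 : 0 ≤ tG (q/p) n := by
    cases n with
    | zero => simp [tG]
    | succ n => exact le_of_lt (tG_pos (ht0' hq hqp) (by omega))
  nlinarith

end PQ

lemma tri_succ (n : ℕ) : (n+1)*n/2 = n*(n-1)/2 + n := by
  have h : (n+1)*n = n*(n-1) + 2*n := by
    cases n with
    | zero => simp
    | succ m => simp [Nat.succ_sub_one]; ring
  have h2 : 2 ∣ n*(n-1) := by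
    cases n with
    | zero => simp
    | succ m => simpa [Nat.succ_sub_one, Nat.mul_comm] using (Nat.even_mul_succ_self m).two_dvd
  omega

lemma exp_split (k d : ℕ) : (k+d)*((k+d)-1)/2 = k*(k-1)/2 + k*d + d*(d-1)/2 := by
  have h : (k+d)*((k+d)-1) = k*(k-1) + 2*(k*d) + d*(d-1) := by
    rcases k with _ | k
    · simp
    · rcases d with _ | d
      · simp
      · have : k+1+(d+1)-1 = k+d+1 := by omega
        rw [this]
        simp [Nat.succ_sub_one]
        ring
  have h2 : 2 ∣ k*(k-1) := by
    rcases k with _ | k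
    · simp
    · simpa [Nat.succ_sub_one, Nat.mul_comm] using (Nat.even_mul_succ_self k).two_dvd
  have h3 : 2 ∣ d*(d-1) := by
    rcases d with _ | d
    · simp
    · simpa [Nat.succ_sub_one, Nat.mul_comm] using (Nat.even_mul_succ_self d).two_dvd
  omega

section PQ2
variable {p q : ℝ} (hq : 0 < q) (hqp : q < p)
include hq hqp

lemma pqFact_eq (n : ℕ) : pqFact p q n = p ^ (n*(n-1)/2) * tFact (q/p) n := by
  induction n with
  | zero => simp [pqFact, tFact]
  | succ n ih =>
    rw [pqFact, Finset.prod_range_succ, ← pqFact, ih, pqInt_eq hq hqp, tFact_succ]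
    rw [show (n+1)*(n+1-1)/2 = (n+1)*n/2 from rfl, tri_succ, pow_add]
    simp only [Nat.add_sub_cancel]
    ring

lemma pqFact_pos (n : ℕ) : 0 < pqFact p q n := by
  rw [pqFact_eq hq hqp]
  exact mul_pos (pow_pos (hp0 hq hqp) _) (tFact_pos (ht0' hq hqp) n)

lemma pqBinom_eq {n k : ℕ} (hk : k ≤ n) :
    pqBinom p q n k = p ^ (k*(n-k)) * tBinom (q/p) n k := by
  have hp : (0:ℝ) < p := hp0 hq hqp
  have ht0 := ht0' hq hqp
  have hFk := tFact_pos ht0 k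
  have hFd := tFact_pos ht0 (n-k)
  rw [pqBinom, pqFact_eq hq hqp, pqFact_eq hq hqp, pqFact_eq hq hqp]
  have hsplit : n*(n-1)/2 = k*(k-1)/2 + k*(n-k) + (n-k)*((n-k)-1)/2 := by
    have := exp_split k (n-k)
    rw [show k + (n-k) = n by omega] at this
    exact this
  rw [hsplit]
  rw [← tBinom_mul_tFact (q/p) n k hk]
  rw [pow_add, pow_add]
  field_simp

lemma pqBern_eq {n k : ℕ} (hk : k ≤ n) (x : ℝ) :
    pqBern p q n k x = p ^ (n*(n-1)/2) * bq (q/p) n k x := by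
  have hp : (0:ℝ) < p := hp0 hq hqp
  have hprod : ∏ s ∈ Finset.range (n-k), (p ^ s - q ^ s * x)
      = p ^ ((n-k)*((n-k)-1)/2) * ∏ s ∈ Finset.range (n-k), (1 - (q/p) ^ s * x) := by
    rw [← Finset.sum_range_id, ← Finset.prod_pow_eq_pow_sum, ← Finset.prod_mul_distrib]
    apply Finset.prod_congr rfl
    intro s _
    have hqs : q ^ s = p ^ s * (q/p) ^ s := by
      rw [div_pow, mul_div_assoc']
      field_simp
    rw [hqs]
    ring
  rw [pqBern, pqBinom_eq hq hqp hk, hprod]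
  have hsplit : n*(n-1)/2 = k*(k-1)/2 + k*(n-k) + (n-k)*((n-k)-1)/2 := by
    have := exp_split k (n-k)
    rw [show k + (n-k) = n by omega] at this
    exact this
  rw [hsplit, pow_add, pow_add, bq]
  ring

lemma pqNode_eq {n k : ℕ} (hk : k ≤ n) (hn : 1 ≤ n) :
    pqNode p q n k = tG (q/p) k / tG (q/p) n := by
  have hp : (0:ℝ) < p := hp0 hq hqp
  have ht0 := ht0' hq hqp
  have hGn := tG_pos ht0 hn
  rcases Nat.eq_zero_or_pos k with hk0 | hk1
  · subst hk0
    simp [pqNode, pqInt, tG]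
  · rw [pqNode, pqInt_eq hq hqp, pqInt_eq hq hqp]
    rw [div_eq_div_iff (by positivity) (by positivity : tG (q/p) n ≠ 0)]
    have hpp : p ^ (n-k) * p ^ (k-1) = p ^ (n-1) := by
      rw [← pow_add]
      congr 1
      omega
    calc p ^ (n-k) * (p ^ (k-1) * tG (q/p) k) * tG (q/p) n
        = (p ^ (n-k) * p ^ (k-1)) * tG (q/p) k * tG (q/p) n := by ring
      _ = p ^ (n-1) * tG (q/p) k * tG (q/p) n := by rw [hpp]
      _ = tG (q/p) k * (p ^ (n-1) * tG (q/p) n) := by ring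

end PQ2


lemma uIcc_mem_bound {a x y : ℝ} (hy : y ∈ Set.uIcc a x) : |y - a| ≤ |x - a| := by
  rw [Set.mem_uIcc] at hy
  rcases hy with ⟨h1, h2⟩ | ⟨h1, h2⟩ <;>
    rw [abs_le] <;> constructor <;>
    nlinarith [le_abs_self (x - a), neg_abs_le (x - a)]

lemma taylor_lip (α M : ℝ) (hα0 : 0 < α) (hα1 : α ≤ 1) (hM : 0 ≤ M) :
    ∀ r : ℕ, ∀ f : ℝ → ℝ, ContDiffOn ℝ r f (Set.Icc 0 1) →
    (∀ u ∈ Set.Icc (0:ℝ) 1, ∀ v ∈ Set.Icc (0:ℝ) 1,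
      |iteratedDerivWithin r f (Set.Icc 0 1) u - iteratedDerivWithin r f (Set.Icc 0 1) v|
        ≤ M * |u - v| ^ α) →
    ∀ a ∈ Set.Icc (0:ℝ) 1, ∀ x ∈ Set.Icc (0:ℝ) 1,
      |f x - ∑ i ∈ Finset.range (r+1),
          iteratedDerivWithin i f (Set.Icc 0 1) a / (i.factorial : ℝ) * (x - a) ^ i|
        ≤ M * |x - a| ^ ((r:ℝ) + α) := by
  intro r
  induction r with
  | zero =>
    intro f hf hLip a ha x hx
    simpa [iteratedDerivWithin_zero] using hLip x hx a ha
  | succ r IH =>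
    intro f hf hLip a ha x hx
    have hUD : UniqueDiffOn ℝ (Set.Icc (0:ℝ) 1) := uniqueDiffOn_Icc (by norm_num)
    set S := Set.Icc (0:ℝ) 1 with hS
    set g := derivWithin f S with hg
    have hgC : ContDiffOn ℝ r g S := by
      apply hf.derivWithin hUD
      norm_cast
    have hsucc : ∀ i : ℕ, ∀ y ∈ S, iteratedDerivWithin (i+1) f S y
        = iteratedDerivWithin i g S y := fun i y hy => congrFun iteratedDerivWithin_succ' y
    have hLipg : ∀ u ∈ S, ∀ v ∈ S,
        |iteratedDerivWithin r g S u - iteratedDerivWithin r g S v| ≤ M * |u - v| ^ α := by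
      intro u hu v hv
      rw [← hsucc r u hu, ← hsucc r v hv]
      exact hLip u hu v hv
    by_cases hxa : x = a
    · subst hxa
      have hsum : ∑ i ∈ Finset.range (r+1+1),
          iteratedDerivWithin i f S x / (i.factorial : ℝ) * (x - x) ^ i = f x := by
        rw [Finset.sum_eq_single_of_mem 0 (by simp)]
        · simp [iteratedDerivWithin_zero]
        · intro i _ hi
          have : (x - x) ^ i = 0 := by
            rw [sub_self, zero_pow hi]
          rw [this, mul_zero]
      rw [hsum, sub_self, abs_zero, sub_self, abs_zero,
        Real.zero_rpow (by positivity : (((r+1:ℕ):ℝ)) + α ≠ 0)]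
      simp
    · -- main case
      have hxa' : x - a ≠ 0 := sub_ne_zero.2 hxa
      have habs_pos : 0 < |x - a| := abs_pos.2 hxa'
      set s := Set.uIcc a x with hs
      have hsS : s ⊆ S := by
        intro y hy
        rw [Set.mem_uIcc] at hy
        rw [hS, Set.mem_Icc]
        rcases ha with ⟨ha1, ha2⟩
        rcases hx with ⟨hx1, hx2⟩
        rcases hy with ⟨h1, h2⟩ | ⟨h1, h2⟩ <;> constructor <;> linarith
      have hfd : DifferentiableOn ℝ f S := by
        apply hf.differentiableOn
        norm_cast
      -- derivative of the Taylor polynomial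
      have hpoly : ∀ y : ℝ, HasDerivAt
          (fun z => ∑ i ∈ Finset.range (r+2),
            iteratedDerivWithin i f S a / (i.factorial : ℝ) * (z - a) ^ i)
          (∑ i ∈ Finset.range (r+1),
            iteratedDerivWithin i g S a / (i.factorial : ℝ) * (y - a) ^ i) y := by
        intro y
        have h1 : HasDerivAt
            (fun z => ∑ i ∈ Finset.range (r+2),
              iteratedDerivWithin i f S a / (i.factorial : ℝ) * (z - a) ^ i)
            (∑ i ∈ Finset.range (r+2),
              iteratedDerivWithin i f S a / (i.factorial : ℝ) * ((i:ℝ) * (y - a) ^ (i-1) * 1)) y := by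
          apply HasDerivAt.fun_sum
          intro i _
          exact (((hasDerivAt_id y).sub_const a).pow i).const_mul _
        convert h1 using 1
        rw [Finset.sum_range_succ' (fun i =>
          iteratedDerivWithin i f S a / (i.factorial : ℝ) * ((i:ℝ) * (y - a) ^ (i-1) * 1)) (r+1)]
        simp only [Nat.cast_zero, zero_mul, mul_zero, add_zero, mul_one, Nat.cast_ofNat,
          Nat.add_sub_cancel]
        apply Finset.sum_congr rfl
        intro i _
        rw [hsucc i a ha]
        rw [Nat.factorial_succ]
        have hfac : ((i+1).factorial : ℝ) ≠ 0 := by positivity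
        have hfi : ((i.factorial : ℕ) : ℝ) ≠ 0 := by positivity
        push_cast
        field_simp
      set P : ℝ → ℝ := fun z => ∑ i ∈ Finset.range (r+2),
        iteratedDerivWithin i f S a / (i.factorial : ℝ) * (z - a) ^ i with hP
      set e : ℝ → ℝ := fun y => g y - ∑ i ∈ Finset.range (r+1),
        iteratedDerivWithin i g S a / (i.factorial : ℝ) * (y - a) ^ i with he
      have hE : ∀ y ∈ s, HasDerivWithinAt (fun z => f z - P z) (e y) s y := by
        intro y hy
        have h1 : HasDerivWithinAt f (g y) s y :=
          ((hfd y (hsS hy)).hasDerivWithinAt).mono hsS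
        exact h1.sub ((hpoly y).hasDerivWithinAt)
      have hbound : ∀ y ∈ s, ‖e y‖ ≤ M * |x - a| ^ ((r:ℝ) + α) := by
        intro y hy
        rw [Real.norm_eq_abs]
        calc |e y| ≤ M * |y - a| ^ ((r:ℝ) + α) := IH g hgC hLipg a ha y (hsS hy)
          _ ≤ M * |x - a| ^ ((r:ℝ) + α) := by
              apply mul_le_mul_of_nonneg_left _ hM
              exact Real.rpow_le_rpow (abs_nonneg _) (uIcc_mem_bound hy) (by positivity)
      have hmvt := Convex.norm_image_sub_le_of_norm_hasDerivWithin_le hE hbound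
        (convex_uIcc a x) (Set.left_mem_uIcc) (Set.right_mem_uIcc)
      have hPa : P a = f a := by
        have hPa0 : P a = ∑ i ∈ Finset.range (r+2),
            iteratedDerivWithin i f S a / (i.factorial : ℝ) * (a - a) ^ i := rfl
        rw [hPa0, Finset.sum_eq_single_of_mem 0 (by simp)]
        · simp [iteratedDerivWithin_zero]
        · intro i _ hi
          have : (a - a) ^ i = 0 := by rw [sub_self, zero_pow hi]
          rw [this, mul_zero]
      rw [Real.norm_eq_abs, Real.norm_eq_abs] at hmvt
      have hEa : f a - P a = 0 := by rw [hPa]; ring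
      rw [hEa, sub_zero] at hmvt
      calc |f x - ∑ i ∈ Finset.range (r+1+1),
            iteratedDerivWithin i f S a / (i.factorial : ℝ) * (x - a) ^ i|
          = |f x - P x| := rfl
        _ ≤ M * |x - a| ^ ((r:ℝ) + α) * |x - a| := hmvt
        _ = M * |x - a| ^ (((r:ℝ)+1) + α) := by
            rw [mul_assoc]
            congr 1
            rw [show ((r:ℝ)+1)+α = ((r:ℝ)+α)+1 by ring,
              Real.rpow_add_one (ne_of_gt habs_pos)]
        _ = M * |x - a| ^ ((((r+1):ℕ):ℝ) + α) := by push_cast; ring_nf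

/-- if `f^{(r)} ∈ Lip_M(α)` then
`‖B^{[r]}_{n,p,q} f - f‖ ≤ D_r M [n]^{-(r+α)/2}`. -/
theorem pq_bernsteinR_lipschitz_rate (r : ℕ) (α M : ℝ) (hα0 : 0 < α) (hα1 : α ≤ 1)
    (hM : 0 < M) :
    ∃ D : ℝ, 0 < D ∧
      ∀ (n : ℕ), 1 ≤ n → ∀ p q : ℝ, 0 < q → q < p → p ≤ 1 →
        ∀ f : ℝ → ℝ, ContDiffOn ℝ r f (Set.Icc 0 1) →
          (∀ u ∈ Set.Icc (0 : ℝ) 1, ∀ v ∈ Set.Icc (0 : ℝ) 1,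
            |iteratedDerivWithin r f (Set.Icc 0 1) u -
                iteratedDerivWithin r f (Set.Icc 0 1) v| ≤ M * |u - v| ^ α) →
          ∀ x ∈ Set.Icc (0 : ℝ) 1,
            |pqBernsteinR p q n r f x - f x| ≤
              D * M * pqInt p q n ^ (-((r : ℝ) + α) / 2) := by
  obtain ⟨C, hC1, hCm⟩ := tMom_le (r+1)
  refine ⟨C, by linarith, ?_⟩
  intro n hn p q hq hqp hp1 f hf hLip x hx
  have hp : (0:ℝ) < p := hp0 hq hqp
  set t := q / p with htdef
  have ht0 : 0 ≤ t := ht0' hq hqp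
  have ht1 : t ≤ 1 := ht1' hq hqp
  obtain ⟨hx0, hx1⟩ := hx
  have hGpos : 0 < tG t n := tG_pos ht0 hn
  have hG1 : 1 ≤ tG t n := tG_one_le ht0 hn
  have hnodemem : ∀ k, k ≤ n → tG t k / tG t n ∈ Set.Icc (0:ℝ) 1 := by
    intro k hk
    constructor
    · exact div_nonneg (tG_nonneg ht0 k) (le_of_lt hGpos)
    · rw [div_le_one hGpos]
      exact tG_mono ht0 hk
  have hpN : (0:ℝ) < p ^ (n*(n-1)/2) := pow_pos hp _
  set T : ℕ → ℝ := fun k => ∑ i ∈ Finset.range (r+1),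
    iteratedDerivWithin i f (Set.Icc 0 1) (tG t k / tG t n) / (i.factorial : ℝ)
      * (x - tG t k / tG t n) ^ i with hT
  have hBR : pqBernsteinR p q n r f x = ∑ k ∈ Finset.range (n+1), bq t n k x * T k := by
    rw [pqBernsteinR]
    have hterm : ∀ k ∈ Finset.range (n+1),
        pqBern p q n k x * ∑ i ∈ Finset.range (r+1),
          iteratedDerivWithin i f (Set.Icc 0 1) (pqNode p q n k) / (i.factorial : ℝ)
            * (x - pqNode p q n k) ^ i
        = p ^ (n*(n-1)/2) * (bq t n k x * T k) := by
      intro k hk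
      rw [Finset.mem_range] at hk
      rw [pqBern_eq hq hqp (by omega) x, pqNode_eq hq hqp (by omega) hn, hT]
      ring
    rw [Finset.sum_congr rfl hterm, ← Finset.mul_sum, ← mul_assoc,
      inv_mul_cancel₀ (ne_of_gt hpN), one_mul]
  have hfx : f x = ∑ k ∈ Finset.range (n+1), bq t n k x * f x := by
    rw [← Finset.sum_mul, bq_sum_one t x n, one_mul]
  set β := (r:ℝ) + α with hβ
  have hβpos : 0 < β := by positivity
  have hβle : β ≤ 2*(r+1) := by push_cast; linarith
  -- step 1 : pointwise Taylor bound
  have htay : ∀ k, k ≤ n → |T k - f x|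
      ≤ M * |tG t k / tG t n - x| ^ β := by
    intro k hk
    rw [abs_sub_comm, abs_sub_comm (tG t k / tG t n) x]
    exact taylor_lip α M hα0 hα1 (le_of_lt hM) r f hf hLip
      (tG t k / tG t n) (hnodemem k hk) x ⟨hx0, hx1⟩
  have hmain : |pqBernsteinR p q n r f x - f x|
      ≤ M * ∑ k ∈ Finset.range (n+1), bq t n k x * |tG t k / tG t n - x| ^ β := by
    rw [hBR]
    nth_rewrite 1 [hfx]
    rw [← Finset.sum_sub_distrib]
    calc |∑ k ∈ Finset.range (n+1), (bq t n k x * T k - bq t n k x * f x)|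
        ≤ ∑ k ∈ Finset.range (n+1), |bq t n k x * T k - bq t n k x * f x| :=
          Finset.abs_sum_le_sum_abs _ _
      _ = ∑ k ∈ Finset.range (n+1), bq t n k x * |T k - f x| := by
          apply Finset.sum_congr rfl
          intro k _
          rw [← mul_sub, abs_mul, abs_of_nonneg (bq_nonneg ht0 ht1 hx0 hx1 n k)]
      _ ≤ ∑ k ∈ Finset.range (n+1), bq t n k x * (M * |tG t k / tG t n - x| ^ β) := by
          apply Finset.sum_le_sum
          intro k hk
          rw [Finset.mem_range] at hk
          exact mul_le_mul_of_nonneg_left (htay k (by omega))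
            (bq_nonneg ht0 ht1 hx0 hx1 n k)
      _ = M * ∑ k ∈ Finset.range (n+1), bq t n k x * |tG t k / tG t n - x| ^ β := by
          rw [Finset.mul_sum]
          apply Finset.sum_congr rfl
          intro k _
          ring
  -- step 2 : Jensen
  set p' : ℝ := (2*(r+1) : ℝ) / β with hp'
  have hp'1 : 1 ≤ p' := by
    rw [hp', le_div_iff₀ hβpos]
    linarith
  have hjensen : ∑ k ∈ Finset.range (n+1), bq t n k x * |tG t k / tG t n - x| ^ β
      ≤ (∑ k ∈ Finset.range (n+1), bq t n k x *
          (tG t k / tG t n - x) ^ (2*(r+1))) ^ (1/p') := by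
    have := Real.arith_mean_le_rpow_mean (Finset.range (n+1))
      (fun k => bq t n k x) (fun k => |tG t k / tG t n - x| ^ β)
      (fun k _ => bq_nonneg ht0 ht1 hx0 hx1 n k) (bq_sum_one t x n)
      (fun k _ => Real.rpow_nonneg (abs_nonneg _) β) hp'1
    have hzp : ∀ k, (|tG t k / tG t n - x| ^ β) ^ p'
        = (tG t k / tG t n - x) ^ (2*(r+1)) := by
      intro k
      rw [← Real.rpow_natCast (tG t k / tG t n - x) (2*(r+1))]
      rw [← Real.rpow_mul (abs_nonneg _)]
      have hβp' : β * p' = ((2*(r+1) : ℕ) : ℝ) := by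
        rw [hp']
        push_cast
        field_simp
      rw [hβp', Real.rpow_natCast, Real.rpow_natCast]
      exact Even.pow_abs ⟨r+1, by ring⟩ _
    calc ∑ k ∈ Finset.range (n+1), bq t n k x * |tG t k / tG t n - x| ^ β
        ≤ (∑ k ∈ Finset.range (n+1), bq t n k x * (|tG t k / tG t n - x| ^ β) ^ p') ^ (1/p') :=
          this
      _ = (∑ k ∈ Finset.range (n+1), bq t n k x *
            (tG t k / tG t n - x) ^ (2*(r+1))) ^ (1/p') := by
          congr 1
          apply Finset.sum_congr rfl
          intro k _
          rw [hzp k]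
  -- step 3 : moment bound
  have hmom : ∑ k ∈ Finset.range (n+1), bq t n k x * (tG t k / tG t n - x) ^ (2*(r+1))
      ≤ C / tG t n ^ (r+1) := by
    have hrw : ∀ k ∈ Finset.range (n+1), bq t n k x * (tG t k / tG t n - x) ^ (2*(r+1))
        = bq t n k x * (tG t k - tG t n * x) ^ (2*(r+1)) / tG t n ^ (2*(r+1)) := by
      intro k _
      have : tG t k / tG t n - x = (tG t k - tG t n * x) / tG t n := by
        field_simp
      rw [this, div_pow]
      ring
    rw [Finset.sum_congr rfl hrw, ← Finset.sum_div]
    have h1 : tMom t x n (2*(r+1)) ≤ C * tG t n ^ (r+1) :=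
      hCm (r+1) (le_refl _) t x ht0 ht1 hx0 hx1 n hn
    have h2 : (0:ℝ) < tG t n ^ (2*(r+1)) := pow_pos hGpos _
    rw [div_le_div_iff₀ h2 (pow_pos hGpos (r+1))]
    calc tMom t x n (2*(r+1)) * tG t n ^ (r+1)
        ≤ (C * tG t n ^ (r+1)) * tG t n ^ (r+1) := by
          apply mul_le_mul_of_nonneg_right h1 (le_of_lt (pow_pos hGpos _))
      _ = C * tG t n ^ (2*(r+1)) := by
          rw [mul_assoc, ← pow_add]
          congr 2
          omega
  -- step 4 : combine rpow estimates
  have hA0 : (0:ℝ) ≤ ∑ k ∈ Finset.range (n+1), bq t n k x *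
      (tG t k / tG t n - x) ^ (2*(r+1)) := by
    apply Finset.sum_nonneg
    intro k _
    apply mul_nonneg (bq_nonneg ht0 ht1 hx0 hx1 n k)
    rw [mul_comm 2 (r+1), pow_mul]
    positivity
  have h1p' : 1/p' = β / (2*(r+1) : ℝ) := by
    rw [hp', one_div_div]
  have hθ0 : 0 ≤ 1/p' := by positivity
  have hθ1 : 1/p' ≤ 1 := by
    rw [div_le_one (by linarith : (0:ℝ) < p')]
    linarith
  have hfinal : (∑ k ∈ Finset.range (n+1), bq t n k x *
      (tG t k / tG t n - x) ^ (2*(r+1))) ^ (1/p')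
      ≤ C * pqInt p q n ^ (-β/2) := by
    have hs1 : (∑ k ∈ Finset.range (n+1), bq t n k x *
        (tG t k / tG t n - x) ^ (2*(r+1))) ^ (1/p')
        ≤ (C / tG t n ^ (r+1)) ^ (1/p') := Real.rpow_le_rpow hA0 hmom hθ0
    have hC0 : (0:ℝ) < C := by linarith
    have hGp : (0:ℝ) < tG t n ^ (r+1) := pow_pos hGpos _
    have hs2 : (C / tG t n ^ (r+1)) ^ (1/p')
        = C ^ (1/p') * (tG t n ^ (r+1) : ℝ) ^ (-(1/p')) := by
      rw [div_eq_mul_inv, Real.mul_rpow (le_of_lt hC0) (inv_nonneg.2 (le_of_lt hGp)),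
        Real.inv_rpow (le_of_lt hGp), ← Real.rpow_neg (le_of_lt hGp)]
    have hs3 : (tG t n ^ (r+1) : ℝ) ^ (-(1/p')) = tG t n ^ (-β/2) := by
      rw [← Real.rpow_natCast (tG t n) (r+1), ← Real.rpow_mul (tG_nonneg ht0 n)]
      congr 1
      rw [h1p']
      have h2r : (2*((r:ℝ)+1)) ≠ 0 := by positivity
      push_cast
      field_simp
    have hs4 : C ^ (1/p') ≤ C := by
      calc C ^ (1/p') ≤ C ^ (1:ℝ) := Real.rpow_le_rpow_of_exponent_le hC1 hθ1
        _ = C := Real.rpow_one C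
    have hmon : tG t n ^ (-β/2) ≤ pqInt p q n ^ (-β/2) := by
      have h01 : 0 < pqInt p q n := pqInt_pos hq hqp hn
      have hle : pqInt p q n ≤ tG t n := pqInt_le_tG hq hqp hp1
      have e : -β/2 = -(β/2) := by ring
      rw [e, Real.rpow_neg (le_of_lt hGpos), Real.rpow_neg (le_of_lt h01)]
      have h3 : pqInt p q n ^ (β/2) ≤ tG t n ^ (β/2) :=
        Real.rpow_le_rpow (le_of_lt h01) hle (by positivity)
      have h4 : (0:ℝ) < pqInt p q n ^ (β/2) := Real.rpow_pos_of_pos h01 _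
      exact inv_anti₀ h4 h3
    have hGneg : (0:ℝ) ≤ tG t n ^ (-β/2) := Real.rpow_nonneg (tG_nonneg ht0 n) _
    calc (∑ k ∈ Finset.range (n+1), bq t n k x *
        (tG t k / tG t n - x) ^ (2*(r+1))) ^ (1/p')
        ≤ (C / tG t n ^ (r+1)) ^ (1/p') := hs1
      _ = C ^ (1/p') * tG t n ^ (-β/2) := by rw [hs2, hs3]
      _ ≤ C * tG t n ^ (-β/2) := mul_le_mul_of_nonneg_right hs4 hGneg
      _ ≤ C * pqInt p q n ^ (-β/2) := mul_le_mul_of_nonneg_left hmon (by linarith)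
  -- conclusion
  calc |pqBernsteinR p q n r f x - f x|
      ≤ M * ∑ k ∈ Finset.range (n+1), bq t n k x * |tG t k / tG t n - x| ^ β := hmain
    _ ≤ M * (∑ k ∈ Finset.range (n+1), bq t n k x *
          (tG t k / tG t n - x) ^ (2*(r+1))) ^ (1/p') :=
        mul_le_mul_of_nonneg_left hjensen (le_of_lt hM)
    _ ≤ M * (C * pqInt p q n ^ (-β/2)) := mul_le_mul_of_nonneg_left hfinal (le_of_lt hM)
    _ = C * M * pqInt p q n ^ (-β/2) := by ring
    _ = C * M * pqInt p q n ^ (-β/2) := rfl
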